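/- arXiv:1611.10294 — 2 statements merged into one kernel-verified Lean document; each statement's English description precedes it below -/
import Mathlib

section
/- There are constants c, n₀ > 0 such that for all integers N ≥ n₀, all t ∈ (0,1) and all m ≥ √(2N)(1 − t N^{−1/3}), taking a = N^{−1/6} one has e^{−2am} ∑_{n=0}^{N−1} ∫_ℝ e^{2ax} φ_n(x)² dx ≤ c N^{2/3}. (This quantity is an upper bound for the trace norm of the operator K_N ϱ_m K_N, where K_N is the Hermite kernel ∑_{n<N} φ_n(x)φ_n(y) and ϱ_m f(x) = f(2m − x).) -/
open Real MeasureTheory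

/-- Physicists' Hermite polynomials: H₀ = 1, H₁ = 2x, H_{n+2} = 2x H_{n+1} − 2(n+1) H_n. -/
noncomputable def physHermite : ℕ → ℝ → ℝ
  | 0, _ => 1
  | 1, x => 2 * x
  | n + 2, x => 2 * x * physHermite (n + 1) x - 2 * ((n : ℝ) + 1) * physHermite n x

/-- The n-th Hermite function (harmonic oscillator wave function)
φₙ(x) = (2ⁿ n! √π)^{−1/2} Hₙ(x) e^{−x²/2}. -/
noncomputable def hermiteFn (n : ℕ) (x : ℝ) : ℝ :=
  ((2 : ℝ) ^ n * Nat.factorial n * Real.sqrt Real.pi) ^ (-(1 : ℝ) / 2) *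
    physHermite n x * Real.exp (-x ^ 2 / 2)
open Filter

lemma physHermite_zero (x : ℝ) : physHermite 0 x = 1 := rfl
lemma physHermite_one (x : ℝ) : physHermite 1 x = 2 * x := rfl
lemma physHermite_add_two (n : ℕ) (x : ℝ) :
    physHermite (n + 2) x = 2 * x * physHermite (n + 1) x - 2 * ((n : ℝ) + 1) * physHermite n x := rfl

lemma physHermite_succ (n : ℕ) (x : ℝ) :
    physHermite (n + 1) x = 2 * x * physHermite n x - 2 * (n : ℝ) * physHermite (n - 1) x := by
  cases n with
  | zero => simp [physHermite_zero, physHermite_one]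
  | succ m => rw [physHermite_add_two]; push_cast; ring_nf

lemma physHermite_hasDerivAt (n : ℕ) (x : ℝ) :
    HasDerivAt (physHermite n) (2 * (n : ℝ) * physHermite (n - 1) x) x := by
  induction n using Nat.twoStepInduction generalizing x with
  | zero => simpa [show physHermite 0 = fun _ => 1 from funext physHermite_zero] using (hasDerivAt_const x (1:ℝ)).congr_deriv (by norm_num)
  | one =>
      have : HasDerivAt (physHermite 1) 2 x := by
        simpa [show physHermite 1 = fun y => 2 * y from funext physHermite_one] using (hasDerivAt_id x).const_mul (2:ℝ)
      simpa [physHermite_zero] using this.congr_deriv (by norm_num)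
  | more n ih1 ih2 =>
      have h1 : HasDerivAt (fun y => 2 * y * physHermite (n + 1) y)
          (2 * physHermite (n + 1) x + 2 * x * (2 * ((n:ℝ)+1) * physHermite n x)) x := by
        have := (((hasDerivAt_id x).const_mul (2:ℝ)).mul (by simpa using ih2 x))
        exact this.congr_deriv (by simp)
      have h2 : HasDerivAt (fun y => 2 * ((n:ℝ) + 1) * physHermite n y)
          (2 * ((n:ℝ)+1) * (2 * (n:ℝ) * physHermite (n - 1) x)) x :=
        (ih1 x).const_mul _
      have h := h1.sub h2
      have heq : (fun y => physHermite (n + 2) y) =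
          fun y => 2 * y * physHermite (n + 1) y - 2 * ((n:ℝ)+1) * physHermite n y := by
        funext y; rw [physHermite_add_two]
      rw [show (physHermite (n+2)) = (fun y => physHermite (n+2) y) from rfl, heq]
      refine h.congr_deriv ?_
      have hrec : physHermite (n + 1) x
          = 2 * x * physHermite n x - 2 * (n:ℝ) * physHermite (n - 1) x := physHermite_succ n x
      push_cast [Nat.add_sub_cancel]
      rw [hrec]; ring

lemma physHermite_continuous (n : ℕ) : Continuous (physHermite n) :=
  continuous_iff_continuousAt.2 fun x => ((physHermite_hasDerivAt n x).differentiableAt).continuousAt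

lemma physHermite_abs_le (n : ℕ) (x : ℝ) :
    |physHermite n x| ≤ 4 ^ n * (Nat.factorial n) * (1 + |x|) ^ n := by
  induction n using Nat.twoStepInduction generalizing x with
  | zero => simp [physHermite_zero]
  | one =>
      rw [physHermite_one]
      have h1 : |2 * x| = 2 * |x| := by rw [abs_mul]; norm_num
      have : (0:ℝ) ≤ |x| := abs_nonneg x
      rw [h1]; simp [Nat.factorial]; nlinarith
  | more n ih1 ih2 =>
      rw [physHermite_add_two]
      have hx : (0:ℝ) ≤ |x| := abs_nonneg x
      have h1x : (1:ℝ) ≤ 1 + |x| := by linarith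
      have h2x : |2 * x| ≤ 2 * (1 + |x|) := by
        rw [abs_mul, abs_two]; linarith [abs_nonneg x]
      have t1 : |2 * x * physHermite (n + 1) x|
          ≤ (2 * (1 + |x|)) * (4 ^ (n+1) * (Nat.factorial (n+1)) * (1 + |x|) ^ (n+1)) := by
        rw [abs_mul]
        exact mul_le_mul h2x (ih2 x) (abs_nonneg _) (by positivity)
      have t2 : |2 * ((n : ℝ) + 1) * physHermite n x|
          ≤ (2 * ((n:ℝ) + 1)) * (4 ^ n * (Nat.factorial n) * (1 + |x|) ^ n) := by
        rw [abs_mul]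
        refine mul_le_mul (by rw [abs_of_nonneg (by positivity)]) (ih1 x) (abs_nonneg _) (by positivity)
      have hmono : (1 + |x|) ^ n ≤ (1 + |x|) ^ (n+2) :=
        pow_le_pow_right₀ h1x (by omega)
      have hmono1 : (1 + |x|) ^ (n+1) ≤ (1 + |x|) ^ (n+2) :=
        pow_le_pow_right₀ h1x (by omega)
      have key : (2 * (1 + |x|)) * (4 ^ (n+1) * (Nat.factorial (n+1)) * (1 + |x|) ^ (n+1))
            + (2 * ((n:ℝ) + 1)) * (4 ^ n * (Nat.factorial n) * (1 + |x|) ^ n)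
          ≤ 4 ^ (n+2) * (Nat.factorial (n+2)) * (1 + |x|) ^ (n+2) := by
        have e1 : (2 * (1 + |x|)) * (4 ^ (n+1) * ((Nat.factorial (n+1)):ℝ) * (1 + |x|) ^ (n+1))
            = 2 * 4 ^ (n+1) * (Nat.factorial (n+1)) * (1 + |x|) ^ (n+2) := by ring
        have e2 : (2 * ((n:ℝ) + 1)) * (4 ^ n * (Nat.factorial n) * (1 + |x|) ^ n)
            ≤ 2 * 4 ^ n * (Nat.factorial (n+1)) * (1 + |x|) ^ (n+2) := by
          have : (2 * ((n:ℝ) + 1)) * (4 ^ n * (Nat.factorial n)) = 2 * 4 ^ n * (Nat.factorial (n+1)) := by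
            push_cast [Nat.factorial_succ]; ring
          calc (2 * ((n:ℝ) + 1)) * (4 ^ n * (Nat.factorial n) * (1 + |x|) ^ n)
              = (2 * 4 ^ n * (Nat.factorial (n+1))) * (1 + |x|) ^ n := by rw [← this]; ring
            _ ≤ (2 * 4 ^ n * (Nat.factorial (n+1))) * (1 + |x|) ^ (n+2) := by
                refine mul_le_mul_of_nonneg_left hmono (by positivity)
        rw [e1]
        have e3 : (2:ℝ) * 4 ^ (n+1) * (Nat.factorial (n+1)) + 2 * 4 ^ n * (Nat.factorial (n+1))
            ≤ 4 ^ (n+2) * (Nat.factorial (n+2)) := by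
          push_cast [Nat.factorial_succ (n+1), pow_succ]
          have h4 : (0:ℝ) < 4 ^ n := by positivity
          have hf : (0:ℝ) < (Nat.factorial (n+1)) := by positivity
          have hn : (0:ℝ) ≤ n := Nat.cast_nonneg n
          nlinarith [mul_pos h4 hf, mul_nonneg (mul_nonneg h4.le hf.le) hn]
        calc 2 * 4 ^ (n+1) * ((Nat.factorial (n+1)):ℝ) * (1 + |x|) ^ (n+2)
              + (2 * ((n:ℝ) + 1)) * (4 ^ n * (Nat.factorial n) * (1 + |x|) ^ n)
            ≤ 2 * 4 ^ (n+1) * ((Nat.factorial (n+1)):ℝ) * (1 + |x|) ^ (n+2)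
              + 2 * 4 ^ n * (Nat.factorial (n+1)) * (1 + |x|) ^ (n+2) := by linarith
          _ = (2 * 4 ^ (n+1) * ((Nat.factorial (n+1)):ℝ) + 2 * 4 ^ n * (Nat.factorial (n+1))) * (1 + |x|) ^ (n+2) := by ring
          _ ≤ 4 ^ (n+2) * (Nat.factorial (n+2)) * (1 + |x|) ^ (n+2) := by
              refine mul_le_mul_of_nonneg_right e3 (by positivity)
      calc |2 * x * physHermite (n + 1) x - 2 * ((n : ℝ) + 1) * physHermite n x|
          ≤ |2 * x * physHermite (n + 1) x| + |2 * ((n : ℝ) + 1) * physHermite n x| := abs_sub _ _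
        _ ≤ 4 ^ (n+2) * (Nat.factorial (n+2)) * (1 + |x|) ^ (n+2) := le_trans (add_le_add t1 t2) key

lemma choose_coeff_id (n k : ℕ) (hk : k ≤ n) :
    ((n + 1 - k : ℕ) : ℝ) * ((n+1).choose k : ℝ) = ((n:ℝ) + 1) * (n.choose k : ℝ) := by
  have h1 := Nat.choose_succ_right_eq (n+1) k
  have h2 := Nat.add_one_mul_choose_eq n k
  have : (n + 1 - k) * ((n+1).choose k) = (n + 1) * (n.choose k) := by
    rw [Nat.mul_comm, ← h1]
    simpa [Nat.succ_eq_add_one] using h2.symm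
  exact_mod_cast congrArg (Nat.cast : ℕ → ℝ) this

lemma physHermite_translate (n : ℕ) (x a : ℝ) :
    physHermite n (x + a)
      = ∑ k ∈ Finset.range (n+1), (n.choose k : ℝ) * (2*a)^(n-k) * physHermite k x := by
  induction n generalizing x a with
  | zero => simp [physHermite_zero]
  | succ n ih =>
      set F : ℝ → ℝ := fun b => physHermite (n+1) (x + b)
        - ∑ k ∈ Finset.range (n+2), ((n+1).choose k : ℝ) * (2*b)^(n+1-k) * physHermite k x with hF
      have claim1 : ∀ b, HasDerivAt F 0 b := by
        intro b
        have hL : HasDerivAt (fun b => physHermite (n+1) (x + b))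
            (2 * ((n:ℝ)+1) * physHermite n (x + b)) b := by
          have h0 : HasDerivAt (fun b : ℝ => x + b) 1 b := by
            simpa using (hasDerivAt_id b).const_add x
          have := (physHermite_hasDerivAt (n+1) (x+b)).comp b h0
          simpa [Function.comp_def] using this
        have hS : HasDerivAt
            (fun b => ∑ k ∈ Finset.range (n+2), ((n+1).choose k : ℝ) * (2*b)^(n+1-k) * physHermite k x)
            (∑ k ∈ Finset.range (n+2),
              ((n+1).choose k : ℝ) * (((n+1-k : ℕ):ℝ) * (2*b)^(n-k) * 2) * physHermite k x) b := by
          apply HasDerivAt.fun_sum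
          intro k hk
          have hklt := Finset.mem_range.mp hk
          rcases Nat.lt_or_ge k (n+1) with hlt | hge
          · have hm : n + 1 - k = (n - k) + 1 := by omega
            rw [hm]
            have hpow : HasDerivAt (fun b : ℝ => (2*b)^(n-k+1))
                (((n-k+1 : ℕ):ℝ) * (2*b)^(n-k) * 2) b := by
              have h2b : HasDerivAt (fun b : ℝ => 2*b) 2 b := by
                simpa using (hasDerivAt_id b).const_mul (2:ℝ)
              have := h2b.fun_pow (n-k+1)
              simpa [Nat.add_sub_cancel, mul_comm, mul_assoc] using this
            have := (hpow.const_mul (((n+1).choose k : ℝ))).mul_const (physHermite k x)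
            convert this using 1 <;> ring
          · have hk' : k = n + 1 := by omega
            subst hk'
            simp only [Nat.sub_self, pow_zero]
            have : HasDerivAt (fun _ : ℝ => ((n+1).choose (n+1) : ℝ) * 1 * physHermite (n+1) x) 0 b :=
              hasDerivAt_const _ _
            exact this.congr_deriv (by simp)
        have hsum_eq : (∑ k ∈ Finset.range (n+2),
              ((n+1).choose k : ℝ) * (((n+1-k : ℕ):ℝ) * (2*b)^(n-k) * 2) * physHermite k x)
            = 2 * ((n:ℝ)+1) * ∑ k ∈ Finset.range (n+1), (n.choose k : ℝ) * (2*b)^(n-k) * physHermite k x := by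
          rw [Finset.sum_range_succ]
          simp only [Nat.sub_self, Nat.cast_zero, zero_mul, mul_zero, add_zero]
          rw [Finset.mul_sum]
          apply Finset.sum_congr rfl
          intro k hk
          have hk' : k ≤ n := Nat.lt_succ_iff.mp (Finset.mem_range.mp hk)
          have hc := choose_coeff_id n k hk'
          linear_combination (2 * (2*b)^(n-k) * physHermite k x) * hc
        have := hL.sub (hS.congr_deriv hsum_eq)
        have hd : 2 * ((n:ℝ)+1) * physHermite n (x + b)
            - 2 * ((n:ℝ)+1) * ∑ k ∈ Finset.range (n+1), (n.choose k : ℝ) * (2*b)^(n-k) * physHermite k x = 0 := by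
          rw [ih x b]; ring
        exact this.congr_deriv hd
      have claim2 : F 0 = 0 := by
        rw [hF]
        simp only [mul_zero]
        rw [Finset.sum_eq_single_of_mem (n+1) (by simp)]
        · simp
        · intro k hk hne
          have hk' : k ≤ n := by
            have := Finset.mem_range.mp hk; omega
          have : n + 1 - k ≠ 0 := by omega
          rw [zero_pow this]
          ring
      have : F a = F 0 :=
        is_const_of_deriv_eq_zero (fun b => (claim1 b).differentiableAt)
          (fun b => (claim1 b).deriv) a 0
      have hFa : F a = 0 := by rw [this, claim2]
      have := sub_eq_zero.mp hFa
      exact this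

lemma integrable_pow_gauss (m : ℕ) : Integrable fun x : ℝ => x ^ m * exp (-x^2) := by
  have := integrable_rpow_mul_exp_neg_mul_sq (b := 1) one_pos (s := (m:ℝ))
    (lt_of_lt_of_le neg_one_lt_zero (Nat.cast_nonneg m))
  simpa [Real.rpow_natCast] using this

lemma integrable_abs_pow_gauss (m : ℕ) : Integrable fun x : ℝ => |x| ^ m * exp (-x^2) := by
  have h := (integrable_pow_gauss m).abs
  refine h.congr ?_
  filter_upwards with x
  rw [abs_mul, abs_pow, abs_of_pos (exp_pos _)]

lemma integrable_one_add_abs_pow_gauss (m : ℕ) :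
    Integrable fun x : ℝ => (1 + |x|) ^ m * exp (-x^2) := by
  have h : Integrable fun x : ℝ =>
      ∑ k ∈ Finset.range (m+1), (m.choose k : ℝ) * (|x| ^ k * exp (-x^2)) :=
    MeasureTheory.integrable_finset_sum _ fun k _ => (integrable_abs_pow_gauss k).const_mul _
  refine h.congr ?_
  filter_upwards with x
  rw [add_comm (1:ℝ) |x|, add_pow, Finset.sum_mul]
  apply Finset.sum_congr rfl
  intro k _
  ring

lemma hermite_prod_bound (j k : ℕ) (x : ℝ) :
    |physHermite j x * physHermite k x * exp (-x^2)|
      ≤ (4 ^ j * (Nat.factorial j) * (4 ^ k * (Nat.factorial k))) * ((1 + |x|) ^ (j+k) * exp (-x^2)) := by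
  rw [abs_mul, abs_mul, abs_of_pos (exp_pos _), pow_add]
  have h1 := physHermite_abs_le j x
  have h2 := physHermite_abs_le k x
  have : |physHermite j x| * |physHermite k x|
      ≤ (4 ^ j * (Nat.factorial j) * (1 + |x|) ^ j) * (4 ^ k * (Nat.factorial k) * (1 + |x|) ^ k) :=
    mul_le_mul h1 h2 (abs_nonneg _) (by positivity)
  calc |physHermite j x| * |physHermite k x| * exp (-x^2)
      ≤ (4 ^ j * (Nat.factorial j) * (1 + |x|) ^ j) * (4 ^ k * (Nat.factorial k) * (1 + |x|) ^ k) * exp (-x^2) :=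
        mul_le_mul_of_nonneg_right this (exp_pos _).le
    _ = 4 ^ j * ↑(Nat.factorial j) * (4 ^ k * ↑(Nat.factorial k)) * ((1 + |x|) ^ j * (1 + |x|) ^ k * exp (-x ^ 2)) := by ring

lemma integrable_hermite_mul_gauss (j k : ℕ) :
    Integrable fun x : ℝ => physHermite j x * physHermite k x * exp (-x^2) := by
  have hmeas : AEStronglyMeasurable (fun x : ℝ => physHermite j x * physHermite k x * exp (-x^2)) volume :=
    (((physHermite_continuous j).mul (physHermite_continuous k)).mul
      (Real.continuous_exp.comp (continuous_pow 2).neg)).aestronglyMeasurable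
  refine Integrable.mono' (((integrable_one_add_abs_pow_gauss (j+k)).const_mul
    ((4:ℝ) ^ j * (Nat.factorial j) * (4 ^ k * (Nat.factorial k))))) hmeas ?_
  filter_upwards with x
  exact hermite_prod_bound j k x

lemma tendsto_one_add_abs_pow_gauss_atTop (m : ℕ) :
    Tendsto (fun x : ℝ => (1 + |x|) ^ m * exp (-x^2)) atTop (nhds 0) := by
  have hlim : Tendsto (fun x : ℝ => (2:ℝ)^m * (x ^ m * exp (-x))) atTop (nhds 0) := by
    simpa using (tendsto_pow_mul_exp_neg_atTop_nhds_zero m).const_mul ((2:ℝ)^m)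
  apply squeeze_zero_norm' ?_ hlim
  filter_upwards [eventually_ge_atTop (1:ℝ)] with x hx
  have hx0 : (0:ℝ) ≤ x := by linarith
  rw [Real.norm_eq_abs, abs_of_nonneg (by positivity), abs_of_nonneg hx0]
  have h1 : (1 + x) ^ m ≤ (2*x) ^ m := pow_le_pow_left₀ (by linarith) (by linarith) m
  have h2 : exp (-x^2) ≤ exp (-x) := by
    apply exp_le_exp.2; nlinarith
  calc (1 + x) ^ m * exp (-x^2) ≤ (2*x)^m * exp (-x) :=
        mul_le_mul h1 h2 (exp_pos _).le (by positivity)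
    _ = 2^m * (x^m * exp (-x)) := by rw [mul_pow]; ring

lemma tendsto_one_add_abs_pow_gauss_atBot (m : ℕ) :
    Tendsto (fun x : ℝ => (1 + |x|) ^ m * exp (-x^2)) atBot (nhds 0) := by
  have := (tendsto_one_add_abs_pow_gauss_atTop m).comp tendsto_neg_atBot_atTop
  refine this.congr ?_
  intro x
  simp [Function.comp, abs_neg, neg_sq]

lemma tendsto_hermite_gauss (j k : ℕ) :
    Tendsto (fun x : ℝ => physHermite j x * physHermite k x * exp (-x^2)) atTop (nhds 0) ∧
    Tendsto (fun x : ℝ => physHermite j x * physHermite k x * exp (-x^2)) atBot (nhds 0) := by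
  have hbTop : Tendsto (fun x : ℝ => ((4:ℝ) ^ j * (Nat.factorial j) * (4 ^ k * (Nat.factorial k)))
      * ((1 + |x|) ^ (j+k) * exp (-x^2))) atTop (nhds 0) := by
    simpa using (tendsto_one_add_abs_pow_gauss_atTop (j+k)).const_mul
      ((4:ℝ) ^ j * (Nat.factorial j) * (4 ^ k * (Nat.factorial k)))
  have hbBot : Tendsto (fun x : ℝ => ((4:ℝ) ^ j * (Nat.factorial j) * (4 ^ k * (Nat.factorial k)))
      * ((1 + |x|) ^ (j+k) * exp (-x^2))) atBot (nhds 0) := by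
    simpa using (tendsto_one_add_abs_pow_gauss_atBot (j+k)).const_mul
      ((4:ℝ) ^ j * (Nat.factorial j) * (4 ^ k * (Nat.factorial k)))
  exact ⟨squeeze_zero_norm (fun x => hermite_prod_bound j k x) hbTop,
    squeeze_zero_norm (fun x => hermite_prod_bound j k x) hbBot⟩

lemma integral_deriv_zero {f f' : ℝ → ℝ} (hderiv : ∀ x, HasDerivAt f (f' x) x)
    (hint : Integrable f') (htop : Tendsto f atTop (nhds 0)) (hbot : Tendsto f atBot (nhds 0)) :
    ∫ x, f' x = 0 := by
  have h1 : ∫ x in Set.Iic (0:ℝ), f' x = f 0 - 0 :=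
    integral_Iic_of_hasDerivAt_of_tendsto
      ((hderiv 0).differentiableAt.continuousAt.continuousWithinAt)
      (fun x _ => hderiv x) hint.integrableOn hbot
  have h2 : ∫ x in Set.Ioi (0:ℝ), f' x = 0 - f 0 :=
    integral_Ioi_of_hasDerivAt_of_tendsto
      ((hderiv 0).differentiableAt.continuousAt.continuousWithinAt)
      (fun x _ => hderiv x) hint.integrableOn htop
  have := integral_add_compl (measurableSet_Iic (a := (0:ℝ))) hint
  rw [Set.compl_Iic] at this
  rw [← this, h1, h2]
  ring

lemma ortho_step (j k : ℕ) :
    ∫ x, physHermite (j+1) x * physHermite k x * exp (-x^2)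
      = 2*(k:ℝ) * ∫ x, physHermite j x * physHermite (k-1) x * exp (-x^2) := by
  set G : ℝ → ℝ := fun x => physHermite j x * physHermite k x * exp (-x^2) with hG
  have hderiv : ∀ x, HasDerivAt G (2*(k:ℝ) * (physHermite j x * physHermite (k-1) x * exp (-x^2))
      - physHermite (j+1) x * physHermite k x * exp (-x^2)) x := by
    intro x
    have hexp : HasDerivAt (fun x : ℝ => exp (-x^2)) (exp (-x^2) * (-(2*x))) x := by
      have h2 : HasDerivAt (fun x : ℝ => -x^2) (-(2*x)) x := by
        simpa using (hasDerivAt_pow 2 x).fun_neg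
      exact h2.exp
    have h := ((physHermite_hasDerivAt j x).mul (physHermite_hasDerivAt k x)).mul hexp
    refine h.congr_deriv ?_
    simp only [Pi.mul_apply]
    have hj := physHermite_succ j x
    linear_combination (physHermite k x * exp (-x^2)) * hj
  have hint : Integrable (fun x => 2*(k:ℝ) * (physHermite j x * physHermite (k-1) x * exp (-x^2))
      - physHermite (j+1) x * physHermite k x * exp (-x^2)) :=
    ((integrable_hermite_mul_gauss j (k-1)).const_mul _).sub (integrable_hermite_mul_gauss (j+1) k)
  have hzero : ∫ x, (2*(k:ℝ) * (physHermite j x * physHermite (k-1) x * exp (-x^2))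
      - physHermite (j+1) x * physHermite k x * exp (-x^2)) = 0 :=
    integral_deriv_zero hderiv hint (tendsto_hermite_gauss j k).1 (tendsto_hermite_gauss j k).2
  rw [MeasureTheory.integral_sub ((integrable_hermite_mul_gauss j (k-1)).const_mul _)
      (integrable_hermite_mul_gauss (j+1) k)] at hzero
  rw [MeasureTheory.integral_const_mul] at hzero
  linarith

lemma ortho_sym (j k : ℕ) :
    ∫ x, physHermite j x * physHermite k x * exp (-x^2)
      = ∫ x, physHermite k x * physHermite j x * exp (-x^2) := by
  congr 1; funext x; ring

lemma ortho_zero (k : ℕ) :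
    ∫ x, physHermite 0 x * physHermite k x * exp (-x^2)
      = if 0 = k then Real.sqrt Real.pi else 0 := by
  cases k with
  | zero =>
      simp only [physHermite_zero, one_mul, if_pos rfl]
      have := integral_gaussian 1
      simpa using this
  | succ k =>
      rw [ortho_sym, ortho_step k 0]
      simp

lemma ortho (j k : ℕ) :
    ∫ x, physHermite j x * physHermite k x * exp (-x^2)
      = if j = k then 2^k * (Nat.factorial k) * Real.sqrt Real.pi else 0 := by
  induction j generalizing k with
  | zero =>
      rw [ortho_zero]
      rcases eq_or_ne 0 k with h | h
      · subst h; simp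
      · simp [h]
  | succ j ih =>
      rw [ortho_step j k]
      cases k with
      | zero => simp
      | succ k =>
          simp only [Nat.add_sub_cancel]
          rw [ih k]
          rcases eq_or_ne j k with h | h
          · subst h
            rw [if_pos rfl, if_pos rfl]
            push_cast [Nat.factorial_succ, pow_succ]
            ring
          · rw [if_neg h, if_neg (by omega)]
            ring

lemma key_integral (n : ℕ) (a : ℝ) :
    ∫ x, exp (2*a*x) * hermiteFn n x ^ 2
      = exp (a^2) * ∑ j ∈ Finset.range (n+1),
          (n.choose j : ℝ) * (2*a^2)^j / (Nat.factorial j) := by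
  set c : ℝ := (2 : ℝ) ^ n * Nat.factorial n * Real.sqrt Real.pi with hc
  have hcpos : 0 < c := by
    have := Real.sqrt_pos.mpr Real.pi_pos
    positivity
  have hcsq : ((c : ℝ) ^ (-(1:ℝ)/2))^2 = c⁻¹ := by
    rw [← Real.rpow_natCast (c ^ (-(1:ℝ)/2)) 2, ← Real.rpow_mul hcpos.le]
    norm_num [Real.rpow_neg_one]
  -- step 1: pointwise rewrite
  have step1 : (fun x => exp (2*a*x) * hermiteFn n x ^ 2)
      = fun x => (c⁻¹ * exp (a^2)) * (physHermite n x * physHermite n x * exp (-(x-a)^2)) := by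
    funext x
    rw [hermiteFn, mul_pow, mul_pow, hcsq]
    have hexp : exp (2*a*x) * exp (-x^2/2) ^ 2 = exp (a^2) * exp (-(x-a)^2) := by
      rw [← Real.exp_nat_mul, ← Real.exp_add, ← Real.exp_add]
      congr 1; ring
    linear_combination (c⁻¹ * physHermite n x ^ 2) * hexp
  rw [step1, MeasureTheory.integral_const_mul]
  -- step 2: translate
  have step2 : ∫ x, physHermite n x * physHermite n x * exp (-(x-a)^2)
      = ∫ y, physHermite n (y + a) * physHermite n (y + a) * exp (-y^2) := by
    rw [← integral_add_right_eq_self (fun x => physHermite n x * physHermite n x * exp (-(x-a)^2)) a]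
    congr 1; funext y; ring_nf
  rw [step2]
  -- step 3: expand the square via translation identity
  have step3 : (fun y => physHermite n (y + a) * physHermite n (y + a) * exp (-y^2))
      = fun y => ∑ k ∈ Finset.range (n+1), ∑ l ∈ Finset.range (n+1),
          ((n.choose k : ℝ) * (2*a)^(n-k) * ((n.choose l : ℝ) * (2*a)^(n-l)))
            * (physHermite k y * physHermite l y * exp (-y^2)) := by
    funext y
    rw [physHermite_translate n y a, Finset.sum_mul_sum, Finset.sum_mul]
    apply Finset.sum_congr rfl
    intro k _
    rw [Finset.sum_mul]
    apply Finset.sum_congr rfl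
    intro l _
    ring
  rw [step3]
  rw [MeasureTheory.integral_finset_sum _ (fun k _ => by
    exact MeasureTheory.integrable_finset_sum _ (fun l _ =>
      (integrable_hermite_mul_gauss k l).const_mul _))]
  have step4 : ∀ k ∈ Finset.range (n+1),
      (∫ y, ∑ l ∈ Finset.range (n+1),
          ((n.choose k : ℝ) * (2*a)^(n-k) * ((n.choose l : ℝ) * (2*a)^(n-l)))
            * (physHermite k y * physHermite l y * exp (-y^2)))
      = ((n.choose k : ℝ) * (2*a)^(n-k))^2 * (2^k * (Nat.factorial k) * Real.sqrt Real.pi) := by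
    intro k hk
    rw [MeasureTheory.integral_finset_sum _ (fun l _ =>
      (integrable_hermite_mul_gauss k l).const_mul _)]
    have : ∀ l ∈ Finset.range (n+1),
        (∫ y, ((n.choose k : ℝ) * (2*a)^(n-k) * ((n.choose l : ℝ) * (2*a)^(n-l)))
          * (physHermite k y * physHermite l y * exp (-y^2)))
        = if k = l then ((n.choose k : ℝ) * (2*a)^(n-k))^2 * (2^k * (Nat.factorial k) * Real.sqrt Real.pi) else 0 := by
      intro l _
      rw [MeasureTheory.integral_const_mul, ortho k l]
      rcases eq_or_ne k l with h | h
      · subst h; rw [if_pos rfl, if_pos rfl]; ring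
      · rw [if_neg h, if_neg h, mul_zero]
    rw [Finset.sum_congr rfl this]
    rw [Finset.sum_ite_eq (Finset.range (n+1)) k
      (fun _ => ((n.choose k : ℝ) * (2*a)^(n-k))^2 * (2^k * (Nat.factorial k) * Real.sqrt Real.pi))]
    rw [if_pos hk]
  rw [Finset.sum_congr rfl step4]
  -- final algebra
  have href := Finset.sum_range_reflect
    (fun k => ((n.choose k : ℝ) * (2*a)^(n-k))^2 * (2^k * (Nat.factorial k) * Real.sqrt Real.pi)) (n+1)
  rw [← href]
  simp only [Nat.add_sub_cancel]
  rw [Finset.mul_sum, Finset.mul_sum]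
  apply Finset.sum_congr rfl
  intro j hj
  have hjn : j ≤ n := Nat.lt_succ_iff.mp (Finset.mem_range.mp hj)
  have h1 : n - (n - j) = j := by omega
  rw [h1, Nat.choose_symm hjn]
  have hfact : ((n.choose j : ℝ) * (Nat.factorial j)) * (Nat.factorial (n-j)) = (Nat.factorial n) := by
    exact_mod_cast Nat.choose_mul_factorial_mul_factorial hjn
  have hpow : (2:ℝ)^n = 2^j * 2^(n-j) := by
    rw [← pow_add]; congr 1; omega
  have hS : Real.sqrt Real.pi ≠ 0 := ne_of_gt (Real.sqrt_pos.mpr Real.pi_pos)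
  have hfj : ((Nat.factorial j : ℝ)) ≠ 0 := by positivity
  have hfn : ((Nat.factorial n : ℝ)) ≠ 0 := by positivity
  have hfnj : ((Nat.factorial (n-j) : ℝ)) ≠ 0 := by positivity
  have hterm : c⁻¹ * (((n.choose j : ℝ) * (2*a)^j)^2 * (2^(n-j) * (Nat.factorial (n-j)) * Real.sqrt Real.pi))
      = (n.choose j : ℝ) * (2*a^2)^j / (Nat.factorial j) := by
    rw [hc, hpow]
    field_simp
    ring_nf
    linear_combination ((n.choose j : ℝ) * a^(j*2) * 2^(j*2)) * hfact
  linear_combination Real.exp (a^2) * hterm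

lemma hockey (N j : ℕ) : ∑ n ∈ Finset.range N, n.choose j = N.choose (j+1) := by
  induction N with
  | zero => simp
  | succ N ih => rw [Finset.sum_range_succ, ih, Nat.choose_succ_succ' N j]; omega

lemma fact_ineq (j : ℕ) : (2*j+1).factorial ≤ 4^j * (Nat.factorial j * Nat.factorial (j+1)) := by
  induction j with
  | zero => simp
  | succ j ih =>
      have h1 : 2*(j+1)+1 = (2*j+1) + 2 := by omega
      rw [h1]
      have e1 : ((2*j+1) + 2).factorial = (2*j+3) * ((2*j+2) * (2*j+1).factorial) := by
        rw [show (2*j+1)+2 = (2*j+2)+1 by omega, Nat.factorial_succ, Nat.factorial_succ]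
      rw [e1]
      have e2 : 4^(j+1) * (Nat.factorial (j+1) * Nat.factorial (j+2))
          = 4 * ((j+2)*(j+1)) * (4^j * (Nat.factorial j * Nat.factorial (j+1))) := by
        rw [Nat.factorial_succ (j+1), Nat.factorial_succ j, pow_succ]
        ring
      rw [e2]
      calc (2*j+3) * ((2*j+2) * (2*j+1).factorial)
          ≤ (2*j+3) * ((2*j+2) * (4^j * (Nat.factorial j * Nat.factorial (j+1)))) := by
            exact Nat.mul_le_mul_left _ (Nat.mul_le_mul_left _ ih)
        _ = ((2*j+3)*(2*j+2)) * (4^j * (Nat.factorial j * Nat.factorial (j+1))) := by ring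
        _ ≤ (4 * ((j+2)*(j+1))) * (4^j * (Nat.factorial j * Nat.factorial (j+1))) := by
            apply Nat.mul_le_mul_right
            nlinarith
        _ = 4 * ((j+2)*(j+1)) * (4^j * (Nat.factorial j * Nat.factorial (j+1))) := by ring

lemma choose_le_pow_div (N k : ℕ) : (N.choose k : ℝ) ≤ (N:ℝ)^k / (Nat.factorial k) := by
  rw [le_div_iff₀ (by positivity : (0:ℝ) < (Nat.factorial k : ℝ))]
  have h : (N.choose k) * (Nat.factorial k) ≤ N^k := by
    calc N.choose k * k.factorial = k.factorial * N.choose k := by ring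
      _ = N.descFactorial k := (Nat.descFactorial_eq_factorial_mul_choose N k).symm
      _ ≤ N^k := Nat.descFactorial_le_pow N k
  exact_mod_cast h

lemma odd_sum_le_exp (z : ℝ) (hz : 0 ≤ z) (N : ℕ) :
    ∑ j ∈ Finset.range N, z^(2*j+1) / (Nat.factorial (2*j+1)) ≤ exp z := by
  have hinj : ∀ x ∈ Finset.range N, ∀ y ∈ Finset.range N, 2*x+1 = 2*y+1 → x = y := by
    intro x _ y _ h; omega
  have himg : ∑ k ∈ (Finset.range N).image (fun j => 2*j+1), z^k / (Nat.factorial k)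
      = ∑ j ∈ Finset.range N, z^(2*j+1)/(Nat.factorial (2*j+1)) := Finset.sum_image hinj
  rw [← himg]
  calc ∑ k ∈ (Finset.range N).image (fun j => 2*j+1), z^k / (Nat.factorial k)
      ≤ ∑ k ∈ Finset.range (2*N+1), z^k / (Nat.factorial k) := by
        apply Finset.sum_le_sum_of_subset_of_nonneg
        · intro k hk
          simp only [Finset.mem_image, Finset.mem_range] at hk ⊢
          obtain ⟨j, hj, rfl⟩ := hk
          omega
        · intro k _ _; positivity
    _ ≤ exp z := Real.sum_le_exp_of_nonneg hz _

set_option maxHeartbeats 1000000 in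

set_option maxHeartbeats 1000000 in
theorem stmt7 :
    ∃ (c : ℝ) (n₀ : ℕ), 0 < c ∧ 0 < n₀ ∧
      ∀ (N : ℕ) (t m : ℝ), n₀ ≤ N → 0 < t → t < 1 →
        Real.sqrt (2 * N) * (1 - t * (N : ℝ) ^ (-(1 : ℝ) / 3)) ≤ m →
        Real.exp (-2 * (N : ℝ) ^ (-(1 : ℝ) / 6) * m) *
            ∑ n ∈ Finset.range N,
              ∫ x : ℝ, Real.exp (2 * (N : ℝ) ^ (-(1 : ℝ) / 6) * x) * hermiteFn n x ^ 2 ≤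
          c * (N : ℝ) ^ ((2 : ℝ) / 3) := by
  refine ⟨Real.exp 4, 1, Real.exp_pos 4, one_pos, ?_⟩
  intro N t m hN ht ht1 hm
  have hNpos : (0:ℝ) < N := by exact_mod_cast hN
  have hN1 : (1:ℝ) ≤ N := by exact_mod_cast hN
  set A : ℝ := (N:ℝ) ^ (-(1:ℝ)/6) with hA_def
  set u : ℝ := (N:ℝ) ^ ((1:ℝ)/3) with hu_def
  have hA : 0 < A := Real.rpow_pos_of_pos hNpos _
  have hu : 0 < u := Real.rpow_pos_of_pos hNpos _
  set z : ℝ := 2 * Real.sqrt 2 * u with hz_def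
  have hs2 : (0:ℝ) < Real.sqrt 2 := Real.sqrt_pos.mpr (by norm_num)
  have hz : 0 < z := by positivity
  set x : ℝ := 2 * A^2 with hx_def
  have hx : 0 ≤ x := by positivity
  -- rpow facts
  have hA2 : A^2 = (N:ℝ) ^ (-(1:ℝ)/3) := by
    rw [hA_def, ← Real.rpow_natCast ((N:ℝ) ^ (-(1:ℝ)/6)) 2, ← Real.rpow_mul hNpos.le]
    norm_num
  have hu2 : u^2 = (N:ℝ) ^ ((2:ℝ)/3) := by
    rw [hu_def, ← Real.rpow_natCast ((N:ℝ) ^ ((1:ℝ)/3)) 2, ← Real.rpow_mul hNpos.le]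
    norm_num
  have huinv : u * (N:ℝ) ^ (-(1:ℝ)/3) = 1 := by
    rw [hu_def, ← Real.rpow_add hNpos]
    norm_num
  have hNpow : (N:ℝ) * (N:ℝ)^(-(1:ℝ)/3) = (N:ℝ)^((2:ℝ)/3) := by
    nth_rewrite 1 [← Real.rpow_one (N:ℝ)]
    rw [← Real.rpow_add hNpos]
    norm_num
  have hNx : (N:ℝ) * x = 2 * u^2 := by
    rw [hx_def, hA2, hu2]
    linear_combination 2 * hNpow
  have e1 : z^2 = 4 * ((N:ℝ) * x) := by
    rw [hNx]
    calc z^2 = 4 * ((Real.sqrt 2)^2 * u^2) := by rw [hz_def]; ring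
      _ = 4 * (2 * u^2) := by rw [Real.sq_sqrt (by norm_num : (0:ℝ) ≤ 2)]
  have e2 : z * (N:ℝ) ^ (-(1:ℝ)/3) = 2 * Real.sqrt 2 := by
    calc z * (N:ℝ) ^ (-(1:ℝ)/3) = 2 * Real.sqrt 2 * (u * (N:ℝ) ^ (-(1:ℝ)/3)) := by
          rw [hz_def]; ring
      _ = 2 * Real.sqrt 2 := by rw [huinv, mul_one]
  have e3 : 2 * A * Real.sqrt (2 * N) = z := by
    rw [Real.sqrt_mul (by norm_num : (0:ℝ) ≤ 2) (N:ℝ)]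
    have hsq : A * Real.sqrt (N:ℝ) = u := by
      rw [Real.sqrt_eq_rpow, hA_def, hu_def, ← Real.rpow_add hNpos]
      norm_num
    calc 2 * A * (Real.sqrt 2 * Real.sqrt (N:ℝ))
        = 2 * Real.sqrt 2 * (A * Real.sqrt (N:ℝ)) := by ring
      _ = 2 * Real.sqrt 2 * u := by rw [hsq]
  -- the sum S
  set S : ℝ := ∑ n ∈ Finset.range N, ∑ j ∈ Finset.range (n+1),
      (n.choose j : ℝ) * x^j / (Nat.factorial j) with hS_def
  have hrw : ∑ n ∈ Finset.range N,
      (∫ y : ℝ, Real.exp (2 * A * y) * hermiteFn n y ^ 2) = Real.exp (A^2) * S := by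
    rw [hS_def, Finset.mul_sum]
    apply Finset.sum_congr rfl
    intro n _
    rw [key_integral n A, hx_def]
  -- bound S
  have hS1 : S ≤ ∑ n ∈ Finset.range N, ∑ j ∈ Finset.range N,
      (n.choose j : ℝ) * x^j / (Nat.factorial j) := by
    apply Finset.sum_le_sum
    intro n hn
    apply Finset.sum_le_sum_of_subset_of_nonneg
    · exact Finset.range_subset_range.mpr (Finset.mem_range.mp hn)
    · intro j _ _; positivity
  have hS2 : ∑ n ∈ Finset.range N, ∑ j ∈ Finset.range N,
      (n.choose j : ℝ) * x^j / (Nat.factorial j)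
      = ∑ j ∈ Finset.range N, (N.choose (j+1) : ℝ) * x^j / (Nat.factorial j) := by
    rw [Finset.sum_comm]
    apply Finset.sum_congr rfl
    intro j _
    rw [show ∀ P : ℕ → ℝ, (∑ n ∈ Finset.range N, P n * x^j / (Nat.factorial j))
        = (∑ n ∈ Finset.range N, P n) * x^j / (Nat.factorial j) from
      fun P => by rw [← Finset.sum_div, ← Finset.sum_mul]]
    congr 2
    exact_mod_cast hockey N j
  have hS3 : ∀ j ∈ Finset.range N, (N.choose (j+1) : ℝ) * x^j / (Nat.factorial j)
      ≤ ((N:ℝ)/z) * (z^(2*j+1) / (Nat.factorial (2*j+1))) := by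
    intro j _
    have t1 : (N.choose (j+1) : ℝ) * x^j / (Nat.factorial j)
        ≤ ((N:ℝ)^(j+1) / (Nat.factorial (j+1))) * x^j / (Nat.factorial j) := by
      have h := choose_le_pow_div N (j+1)
      have hjf : (0:ℝ) < (Nat.factorial j : ℝ) := by positivity
      exact (div_le_div_iff_of_pos_right hjf).2 (mul_le_mul_of_nonneg_right h (by positivity))
    refine t1.trans ?_
    have hrhs : ((N:ℝ)/z) * (z^(2*j+1) / (Nat.factorial (2*j+1)))
        = (N:ℝ) * (z^2)^j / (Nat.factorial (2*j+1)) := by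
      have : z^(2*j+1) = z * (z^2)^j := by
        rw [← pow_mul, pow_succ']
      rw [this]
      field_simp
    have lhs_eq : ((N:ℝ)^(j+1) / (Nat.factorial (j+1))) * x^j / (Nat.factorial j)
        = (N:ℝ)^(j+1) * x^j / ((Nat.factorial (j+1)) * (Nat.factorial j)) := by
      rw [div_mul_eq_mul_div, div_div]
    rw [lhs_eq, hrhs, e1]
    rw [div_le_div_iff₀ (by positivity) (by positivity)]
    have hf : ((2*j+1).factorial : ℝ) ≤ 4^j * ((Nat.factorial j) * (Nat.factorial (j+1))) := by
      exact_mod_cast fact_ineq j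
    calc (N:ℝ)^(j+1) * x^j * (2*j+1).factorial
        ≤ (N:ℝ)^(j+1) * x^j * (4^j * ((Nat.factorial j) * (Nat.factorial (j+1)))) := by
          apply mul_le_mul_of_nonneg_left hf (by positivity)
      _ = ((N:ℝ) * (4*((N:ℝ)*x))^j) * ((Nat.factorial (j+1)) * (Nat.factorial j)) := by
          rw [mul_pow 4 ((N:ℝ)*x) j, mul_pow (N:ℝ) x j]
          ring
  have hS4 : S ≤ ((N:ℝ)/z) * Real.exp z := by
    have h1 : S ≤ ∑ j ∈ Finset.range N, ((N:ℝ)/z) * (z^(2*j+1) / (Nat.factorial (2*j+1))) :=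
      le_trans (le_of_le_of_eq hS1 hS2) (Finset.sum_le_sum hS3)
    rw [← Finset.mul_sum] at h1
    refine h1.trans ?_
    exact mul_le_mul_of_nonneg_left (odd_sum_le_exp z hz.le N) (div_nonneg (Nat.cast_nonneg N) hz.le)
  have hS0 : 0 ≤ S := by
    apply Finset.sum_nonneg
    intro n _
    apply Finset.sum_nonneg
    intro j _
    positivity
  have hA2le : A^2 ≤ 1 := by
    rw [hA2]
    exact Real.rpow_le_one_of_one_le_of_nonpos hN1 (by norm_num)
  -- exponent bound
  have hstep : -2*A*m ≤ -z + 2*Real.sqrt 2 := by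
    have h1 : 0 ≤ (m - Real.sqrt (2*N) * (1 - t * (N:ℝ)^(-(1:ℝ)/3))) * A :=
      mul_nonneg (sub_nonneg.mpr hm) hA.le
    calc -2*A*m ≤ -2*A*(Real.sqrt (2*N) * (1 - t * (N:ℝ)^(-(1:ℝ)/3))) := by linarith [h1]
      _ = -z * (1 - t * (N:ℝ)^(-(1:ℝ)/3)) := by rw [← e3]; ring
      _ = -z + t * (z * (N:ℝ)^(-(1:ℝ)/3)) := by ring
      _ = -z + t * (2*Real.sqrt 2) := by rw [e2]
      _ ≤ -z + 2*Real.sqrt 2 := by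
          have : t * (2*Real.sqrt 2) ≤ 1 * (2*Real.sqrt 2) :=
            mul_le_mul_of_nonneg_right ht1.le (by positivity)
          linarith
  have hNz : (N:ℝ)/z ≤ (N:ℝ)^((2:ℝ)/3) := by
    rw [div_le_iff₀ hz]
    have hcomb : (N:ℝ)^((2:ℝ)/3) * u = (N:ℝ) := by
      rw [hu_def, ← Real.rpow_add hNpos]
      norm_num [Real.rpow_one]
    have h12 : (1:ℝ) ≤ Real.sqrt 2 := by
      nlinarith [Real.sq_sqrt (by norm_num : (0:ℝ) ≤ 2), Real.sqrt_nonneg 2]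
    calc (N:ℝ) = (N:ℝ)^((2:ℝ)/3) * u := hcomb.symm
      _ ≤ (N:ℝ)^((2:ℝ)/3) * (2 * Real.sqrt 2 * u) := by
          have hup : (0:ℝ) < (N:ℝ)^((2:ℝ)/3) := Real.rpow_pos_of_pos hNpos _
          exact mul_le_mul_of_nonneg_left
            (le_mul_of_one_le_left hu.le (by linarith)) hup.le
      _ = (N:ℝ)^((2:ℝ)/3) * z := by rw [hz_def]
  have hexp4 : Real.exp (2*Real.sqrt 2 + 1) ≤ Real.exp 4 := by
    apply Real.exp_le_exp.2
    nlinarith [Real.sq_sqrt (by norm_num : (0:ℝ) ≤ 2), Real.sqrt_nonneg 2]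
  -- main chain
  rw [hrw]
  calc Real.exp (-2*A*m) * (Real.exp (A^2) * S)
      ≤ Real.exp (-z + 2*Real.sqrt 2) * (Real.exp 1 * (((N:ℝ)/z) * Real.exp z)) := by
        apply mul_le_mul (Real.exp_le_exp.2 hstep)
        · apply mul_le_mul (Real.exp_le_exp.2 hA2le) hS4 hS0 (Real.exp_pos 1).le
        · positivity
        · positivity
    _ = Real.exp (2*Real.sqrt 2 + 1) * ((N:ℝ)/z) := by
        rw [show Real.exp (-z+2*Real.sqrt 2) * (Real.exp 1 * (((N:ℝ)/z) * Real.exp z))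
            = (Real.exp (-z+2*Real.sqrt 2) * Real.exp 1 * Real.exp z) * ((N:ℝ)/z) from by ring,
          ← Real.exp_add, ← Real.exp_add,
          show -z + 2*Real.sqrt 2 + 1 + z = 2*Real.sqrt 2 + 1 from by ring]
    _ ≤ Real.exp 4 * (N:ℝ)^((2:ℝ)/3) := by
        apply mul_le_mul hexp4 hNz (by positivity) (Real.exp_pos 4).le
end

section
/- For every integer N ≥ 1 and every m ∈ ℝ, ∫_m^∞ ( ∑_{n=0}^{N−1} φ_n(x)² ) dx = √(2N) ∫_0^∞ z φ_N(m+z) φ_{N−1}(m+z) dz. -/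
open Real MeasureTheory

lemma physHermite_rec (k : ℕ) (x : ℝ) :
    physHermite (k+1) x = 2*x*physHermite k x - 2*(k:ℝ)*physHermite (k-1) x := by
  cases k with
  | zero => simp [physHermite]
  | succ j => rw [physHermite]; push_cast; ring

lemma hasDerivAt_physHermite (n : ℕ) (x : ℝ) :
    HasDerivAt (physHermite n) (2 * n * physHermite (n - 1) x) x := by
  induction n using Nat.twoStepInduction generalizing x with
  | zero => simpa [physHermite] using hasDerivAt_const x (1:ℝ)
  | one =>
    have : HasDerivAt (fun x : ℝ => 2 * x) 2 x := by
      simpa using (hasDerivAt_id x).const_mul (2:ℝ)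
    refine this.congr_deriv ?_
    simp [physHermite]
  | more k ih0 ih1 =>
    have h1 := ih1 x
    have h0 := ih0 x
    have hx : HasDerivAt (fun y : ℝ => 2 * y) 2 x := by
      simpa using (hasDerivAt_id x).const_mul (2:ℝ)
    have := (hx.mul h1).sub (h0.const_mul (2 * ((k:ℝ)+1)))
    refine this.congr_deriv ?_
    have hr := physHermite_rec k x
    push_cast [Nat.succ_sub_one]
    push_cast at hr ⊢
    rw [hr]; ring

lemma integrable_poly_gauss (M : ℕ) :
    Integrable (fun x : ℝ => (1+x^2)^M * Real.exp (-x^2)) := by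
  have hC : (0:ℝ) < 2^M * M.factorial * Real.exp (1/2) := by positivity
  apply Integrable.mono' (((integrable_exp_neg_mul_sq (by norm_num : (0:ℝ) < 1/2)).const_mul
    (2^M * M.factorial * Real.exp (1/2))))
  · exact (((continuous_const.add (continuous_pow 2)).pow M).mul
      (Real.continuous_exp.comp (continuous_pow 2).neg)).aestronglyMeasurable
  · filter_upwards with x
    have h1 : (0:ℝ) ≤ 1 + x^2 := by positivity
    have key := Real.pow_div_factorial_le_exp (x := (1+x^2)/2) (by positivity) M
    have h2 : (1+x^2)^M ≤ 2^M * M.factorial * Real.exp ((1+x^2)/2) := by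
      have := (div_le_iff₀ (by positivity : (0:ℝ) < (M.factorial:ℝ))).mp key
      calc (1+x^2)^M = ((1+x^2)/2)^M * 2^M := by rw [div_pow]; field_simp
        _ ≤ (Real.exp ((1+x^2)/2) * M.factorial) * 2^M := by
            apply mul_le_mul_of_nonneg_right this (by positivity)
        _ = 2^M * M.factorial * Real.exp ((1+x^2)/2) := by ring
    rw [Real.norm_eq_abs, abs_of_nonneg (by positivity)]
    calc (1+x^2)^M * Real.exp (-x^2)
        ≤ (2^M * M.factorial * Real.exp ((1+x^2)/2)) * Real.exp (-x^2) := by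
          apply mul_le_mul_of_nonneg_right h2 (Real.exp_pos _).le
      _ = 2^M * M.factorial * Real.exp (1/2) * Real.exp (-(1/2) * x^2) := by
          have e : Real.exp ((1+x^2)/2) * Real.exp (-x^2) = Real.exp (1/2) * Real.exp (-(1/2) * x^2) := by
            rw [← Real.exp_add, ← Real.exp_add]; ring_nf
          rw [mul_assoc, e]; ring

lemma integrable_of_poly_gauss_bound {f : ℝ → ℝ} (hf : Continuous f) (C : ℝ) (M : ℕ)
    (h : ∀ x, |f x| ≤ C * ((1+x^2)^M * Real.exp (-x^2))) : Integrable f := by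
  apply Integrable.mono' ((integrable_poly_gauss M).const_mul C) hf.aestronglyMeasurable
  filter_upwards with x
  simpa [mul_assoc] using h x

lemma tendsto_poly_gauss (M : ℕ) :
    Filter.Tendsto (fun x : ℝ => (1+x^2)^M * Real.exp (-x^2)) Filter.atTop (nhds 0) := by
  have h1 : Filter.Tendsto (fun x : ℝ => 1 + x^2) Filter.atTop Filter.atTop := by
    apply Filter.tendsto_atTop_add_const_left
    exact Filter.tendsto_pow_atTop (by norm_num)
  have h2 := (tendsto_pow_mul_exp_neg_atTop_nhds_zero M).comp h1
  have h3 := h2.mul_const (Real.exp 1)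
  rw [zero_mul] at h3
  apply h3.congr
  intro x
  simp only [Function.comp]
  rw [mul_assoc, ← Real.exp_add]
  ring_nf

lemma tendsto_of_poly_gauss_bound {f : ℝ → ℝ} (C : ℝ) (M : ℕ)
    (h : ∀ x, |f x| ≤ C * ((1+x^2)^M * Real.exp (-x^2))) :
    Filter.Tendsto f Filter.atTop (nhds 0) := by
  have := (tendsto_poly_gauss M).const_mul C
  rw [mul_zero] at this
  exact squeeze_zero_norm (fun x => by simpa using h x) this


noncomputable def hc (n : ℕ) : ℝ :=
  ((2 : ℝ) ^ n * Nat.factorial n * Real.sqrt Real.pi) ^ (-(1 : ℝ) / 2)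

lemma hermiteFn_eq (n : ℕ) (x : ℝ) :
    hermiteFn n x = hc n * physHermite n x * Real.exp (-x ^ 2 / 2) := rfl

lemma hc_pos (n : ℕ) : 0 < hc n := by
  have h : (0:ℝ) < (2:ℝ)^n * Nat.factorial n * Real.sqrt Real.pi := by
    have := Real.sqrt_pos.mpr Real.pi_pos
    positivity
  exact Real.rpow_pos_of_pos h _

lemma hc_succ (n : ℕ) : hc (n+1) * Real.sqrt (2*((n:ℝ)+1)) = hc n := by
  have hpi := Real.sqrt_pos.mpr Real.pi_pos
  have hA : (0:ℝ) < (2:ℝ)^n * Nat.factorial n * Real.sqrt Real.pi := by positivity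
  have hB : (0:ℝ) < 2*((n:ℝ)+1) := by positivity
  have key : ((2:ℝ)^(n+1) * Nat.factorial (n+1) * Real.sqrt Real.pi)
      = ((2:ℝ)^n * Nat.factorial n * Real.sqrt Real.pi) * (2*((n:ℝ)+1)) := by
    rw [Nat.factorial_succ]; push_cast; ring
  unfold hc
  rw [key, Real.mul_rpow hA.le hB.le, mul_assoc, Real.sqrt_eq_rpow (2*((n:ℝ)+1)),
    ← Real.rpow_add hB]
  norm_num

lemma hc_mul_two_n (n : ℕ) : hc n * (2*(n:ℝ)) = Real.sqrt (2*(n:ℝ)) * hc (n-1) := by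
  cases n with
  | zero => simp
  | succ k =>
    have h := hc_succ k
    have hsq : Real.sqrt (2*((k:ℝ)+1)) ^ 2 = 2*((k:ℝ)+1) :=
      Real.sq_sqrt (by positivity)
    push_cast [Nat.succ_sub_one]
    linear_combination Real.sqrt (2*((k:ℝ)+1)) * h - hc (k+1) * hsq

lemma hasDerivAt_hermiteFn (n : ℕ) (x : ℝ) :
    HasDerivAt (hermiteFn n)
      (Real.sqrt (2*(n:ℝ)) * hermiteFn (n-1) x - x * hermiteFn n x) x := by
  have hE : HasDerivAt (fun x : ℝ => Real.exp (-x^2/2)) (Real.exp (-x^2/2) * (-x)) x := by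
    have hi : HasDerivAt (fun x : ℝ => -x^2/2) (-x) x := by
      have := ((hasDerivAt_pow 2 x).neg).div_const 2
      refine this.congr_deriv ?_
      push_cast
      ring
    simpa [mul_comm] using hi.exp
  have hH := hasDerivAt_physHermite n x
  have : HasDerivAt (fun x => hc n * (physHermite n x * Real.exp (-x^2/2))) _ x :=
    ((hH.mul hE).const_mul (hc n))
  have hfun : (fun x => hc n * (physHermite n x * Real.exp (-x^2/2))) = hermiteFn n := by
    ext y; rw [hermiteFn_eq]; ring
  rw [hfun] at this
  refine this.congr_deriv ?_
  have hcm := hc_mul_two_n n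
  rw [hermiteFn_eq, hermiteFn_eq]
  have expand : hc n * (2*(n:ℝ) * physHermite (n-1) x * Real.exp (-x^2/2)
      + physHermite n x * (Real.exp (-x^2/2) * (-x)))
      = (hc n * (2*(n:ℝ))) * physHermite (n-1) x * Real.exp (-x^2/2)
        - x * (hc n * physHermite n x * Real.exp (-x^2/2)) := by ring
  rw [expand, hcm]; ring

lemma hermite_rec (n : ℕ) (x : ℝ) :
    Real.sqrt (2*((n:ℝ)+1)) * hermiteFn (n+1) x
      = 2*x*hermiteFn n x - Real.sqrt (2*(n:ℝ)) * hermiteFn (n-1) x := by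
  have h := hc_succ n
  have hr := physHermite_rec n x
  have hcm := hc_mul_two_n n
  rw [hermiteFn_eq, hermiteFn_eq, hermiteFn_eq, hr]
  have : Real.sqrt (2*((n:ℝ)+1)) * (hc (n+1) * (2*x*physHermite n x - 2*(n:ℝ)*physHermite (n-1) x) * Real.exp (-x^2/2))
      = (hc (n+1) * Real.sqrt (2*((n:ℝ)+1))) * (2*x*physHermite n x) * Real.exp (-x^2/2)
        - (hc (n+1) * Real.sqrt (2*((n:ℝ)+1))) * (2*(n:ℝ)) * physHermite (n-1) x * Real.exp (-x^2/2) := by ring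
  rw [this, h, hcm]; ring

lemma hasDerivAt_K (N : ℕ) (x : ℝ) :
    HasDerivAt (fun x => ∑ n ∈ Finset.range N, hermiteFn n x ^ 2)
      (-(Real.sqrt (2*(N:ℝ)) * hermiteFn N x * hermiteFn (N-1) x)) x := by
  induction N with
  | zero => simpa using hasDerivAt_const x (0:ℝ)
  | succ k ih =>
    have hk := (hasDerivAt_hermiteFn k x).pow 2
    have : HasDerivAt (fun x => (∑ n ∈ Finset.range k, hermiteFn n x ^ 2) + hermiteFn k x ^ 2) _ x :=
      ih.add hk
    have hfun : (fun x => (∑ n ∈ Finset.range k, hermiteFn n x ^ 2) + hermiteFn k x ^ 2)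
        = fun x => ∑ n ∈ Finset.range (k+1), hermiteFn n x ^ 2 := by
      ext y; rw [Finset.sum_range_succ]
    rw [hfun] at this
    refine this.congr_deriv ?_
    have hr := hermite_rec k x
    push_cast [Nat.succ_sub_one]
    push_cast at hr
    linear_combination (hermiteFn k x) * hr

lemma physHermite_bound (n : ℕ) :
    ∃ C : ℝ, 0 ≤ C ∧ ∀ x : ℝ, |physHermite n x| ≤ C * (1+x^2)^n := by
  induction n using Nat.twoStepInduction with
  | zero => exact ⟨1, zero_le_one, fun x => by simp [physHermite]⟩
  | one =>
    refine ⟨1, zero_le_one, fun x => ?_⟩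
    have : |physHermite 1 x| = 2 * |x| := by
      rw [show physHermite 1 x = 2 * x from rfl, abs_mul]; norm_num
    rw [this]
    nlinarith [abs_nonneg x, sq_abs x, sq_nonneg (|x| - 1)]
  | more k ih0 ih1 =>
    obtain ⟨C0, hC0, h0⟩ := ih0
    obtain ⟨C1, hC1, h1⟩ := ih1
    refine ⟨C1 + 2*((k:ℝ)+1)*C0, by positivity, fun x => ?_⟩
    have h2 : (1:ℝ) ≤ 1 + x^2 := by nlinarith [sq_nonneg x]
    have hxx : |2*x| ≤ 1 + x^2 := by
      rw [abs_mul]; norm_num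
      nlinarith [abs_nonneg x, sq_abs x, sq_nonneg (|x| - 1)]
    have e : physHermite (k+2) x
        = 2*x*physHermite (k+1) x - 2*((k:ℝ)+1)*physHermite k x := rfl
    calc |physHermite (k+2) x|
        ≤ |2*x| * |physHermite (k+1) x| + 2*((k:ℝ)+1) * |physHermite k x| := by
          rw [e]
          refine (abs_sub _ _).trans ?_
          have t1 : |2*x*physHermite (k+1) x| = |2*x| * |physHermite (k+1) x| :=
            abs_mul _ _
          have t2 : |2*((k:ℝ)+1)*physHermite k x| = 2*((k:ℝ)+1) * |physHermite k x| := by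
            rw [abs_mul, abs_of_nonneg (show (0:ℝ) ≤ 2*((k:ℝ)+1) by positivity)]
          rw [t1, t2]
      _ ≤ (1+x^2) * (C1 * (1+x^2)^(k+1)) + 2*((k:ℝ)+1) * (C0 * (1+x^2)^k) := by
          gcongr
          all_goals first
            | exact abs_nonneg _
            | exact h1 x
            | exact h0 x
            | positivity
      _ ≤ (C1 + 2*((k:ℝ)+1)*C0) * (1+x^2)^(k+2) := by
          have e1 : (1+x^2) * (C1 * (1+x^2)^(k+1)) = C1 * (1+x^2)^(k+2) := by ring
          have e2 : (1+x^2)^k ≤ (1+x^2)^(k+2) := by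
            apply pow_le_pow_right₀ h2; omega
          rw [e1]
          have e3 := mul_le_mul_of_nonneg_left e2
            (show (0:ℝ) ≤ 2*((k:ℝ)+1)*C0 by positivity)
          nlinarith [e3]

lemma continuous_hermiteFn (n : ℕ) : Continuous (hermiteFn n) :=
  continuous_iff_continuousAt.mpr fun x =>
    (hasDerivAt_hermiteFn n x).differentiableAt.continuousAt

lemma abs_hermiteFn_le (n : ℕ) :
    ∃ C : ℝ, 0 ≤ C ∧ ∀ x : ℝ, |hermiteFn n x| ≤ C * (1+x^2)^n * Real.exp (-x^2/2) := by
  obtain ⟨C, hC, h⟩ := physHermite_bound n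
  refine ⟨hc n * C, mul_nonneg (hc_pos n).le hC, fun x => ?_⟩
  rw [hermiteFn_eq, abs_mul, abs_mul, abs_of_nonneg (hc_pos n).le,
    abs_of_nonneg (Real.exp_pos _).le]
  calc hc n * |physHermite n x| * Real.exp (-x^2/2)
      ≤ hc n * (C * (1+x^2)^n) * Real.exp (-x^2/2) := by
        gcongr
        all_goals first
          | exact h x
          | exact (hc_pos n).le
      _ = hc n * C * (1+x^2)^n * Real.exp (-x^2/2) := by ring

lemma integrable_xk_hermite_mul (a b k : ℕ) :
    Integrable (fun x : ℝ => x^k * (hermiteFn a x * hermiteFn b x)) := by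
  obtain ⟨Ca, hCa, ha⟩ := abs_hermiteFn_le a
  obtain ⟨Cb, hCb, hb⟩ := abs_hermiteFn_le b
  apply integrable_of_poly_gauss_bound
    (((continuous_pow k).mul ((continuous_hermiteFn a).mul (continuous_hermiteFn b))))
    (Ca * Cb) (a+b+k)
  intro x
  have hx : |x^k| ≤ (1+x^2)^k := by
    rw [abs_pow]
    apply pow_le_pow_left₀ (abs_nonneg x)
    nlinarith [abs_nonneg x, sq_abs x, sq_nonneg (|x| - 1)]
  have hee : Real.exp (-x^2/2) * Real.exp (-x^2/2) = Real.exp (-x^2) := by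
    rw [← Real.exp_add]; ring_nf
  have h1 : (0:ℝ) ≤ 1 + x^2 := by positivity
  calc |x^k * (hermiteFn a x * hermiteFn b x)|
      = |x^k| * (|hermiteFn a x| * |hermiteFn b x|) := by rw [abs_mul, abs_mul]
    _ ≤ (1+x^2)^k * ((Ca * (1+x^2)^a * Real.exp (-x^2/2)) * (Cb * (1+x^2)^b * Real.exp (-x^2/2))) := by
        gcongr
        all_goals first
          | exact hx
          | exact ha x
          | exact hb x
          | exact mul_nonneg (abs_nonneg _) (abs_nonneg _)
          | exact abs_nonneg _
          | positivity
    _ = Ca * Cb * ((1+x^2)^(a+b+k) * (Real.exp (-x^2/2) * Real.exp (-x^2/2))) := by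
        rw [pow_add, pow_add]; ring
    _ = Ca * Cb * ((1+x^2)^(a+b+k) * Real.exp (-x^2)) := by rw [hee]

lemma tendsto_xk_hermite_mul (a b k : ℕ) :
    Filter.Tendsto (fun x : ℝ => x^k * (hermiteFn a x * hermiteFn b x))
      Filter.atTop (nhds 0) := by
  obtain ⟨Ca, hCa, ha⟩ := abs_hermiteFn_le a
  obtain ⟨Cb, hCb, hb⟩ := abs_hermiteFn_le b
  apply tendsto_of_poly_gauss_bound (Ca * Cb) (a+b+k)
  intro x
  have hx : |x^k| ≤ (1+x^2)^k := by
    rw [abs_pow]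
    apply pow_le_pow_left₀ (abs_nonneg x)
    nlinarith [abs_nonneg x, sq_abs x, sq_nonneg (|x| - 1)]
  have hee : Real.exp (-x^2/2) * Real.exp (-x^2/2) = Real.exp (-x^2) := by
    rw [← Real.exp_add]; ring_nf
  have h1 : (0:ℝ) ≤ 1 + x^2 := by positivity
  calc |x^k * (hermiteFn a x * hermiteFn b x)|
      = |x^k| * (|hermiteFn a x| * |hermiteFn b x|) := by rw [abs_mul, abs_mul]
    _ ≤ (1+x^2)^k * ((Ca * (1+x^2)^a * Real.exp (-x^2/2)) * (Cb * (1+x^2)^b * Real.exp (-x^2/2))) := by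
        gcongr
        all_goals first
          | exact hx
          | exact ha x
          | exact hb x
          | exact mul_nonneg (abs_nonneg _) (abs_nonneg _)
          | exact abs_nonneg _
          | positivity
    _ = Ca * Cb * ((1+x^2)^(a+b+k) * (Real.exp (-x^2/2) * Real.exp (-x^2/2))) := by
        rw [pow_add, pow_add]; ring
    _ = Ca * Cb * ((1+x^2)^(a+b+k) * Real.exp (-x^2)) := by rw [hee]

lemma integrable_comp_add {f : ℝ → ℝ} (hf : Integrable f) (m : ℝ) :
    Integrable (fun z => f (m + z)) :=
  ((measurePreserving_add_left (volume : Measure ℝ) m).integrable_comp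
    hf.aestronglyMeasurable).mpr hf

lemma tendsto_add_atTop (m : ℝ) :
    Filter.Tendsto (fun z : ℝ => m + z) Filter.atTop Filter.atTop :=
  Filter.tendsto_atTop_add_const_left _ m Filter.tendsto_id

theorem stmt8 (N : ℕ) (hN : 1 ≤ N) (m : ℝ) :
    (∫ x in Set.Ioi m, ∑ n ∈ Finset.range N, hermiteFn n x ^ 2) =
      Real.sqrt (2 * N) *
        ∫ z in Set.Ioi (0 : ℝ), z * hermiteFn N (m + z) * hermiteFn (N - 1) (m + z) := by
  set K : ℝ → ℝ := fun x => ∑ n ∈ Finset.range N, hermiteFn n x ^ 2 with hK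
  set g : ℝ → ℝ := fun x => Real.sqrt (2 * (N:ℝ)) * hermiteFn N x * hermiteFn (N-1) x with hg
  -- integrabilities
  have KInt : Integrable K := by
    apply integrable_finset_sum
    intro n _
    have e : (fun x : ℝ => x^0 * (hermiteFn n x * hermiteFn n x))
        = fun x => hermiteFn n x ^ 2 := by ext x; ring
    rw [← e]; exact integrable_xk_hermite_mul n n 0
  have gInt : Integrable g := by
    have e : (fun x : ℝ => Real.sqrt (2*(N:ℝ)) * (x^0 * (hermiteFn N x * hermiteFn (N-1) x)))
        = g := by ext x; simp [hg]; ring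
    rw [← e]; exact (integrable_xk_hermite_mul N (N-1) 0).const_mul _
  have xgInt : Integrable (fun x => x * g x) := by
    have e : (fun x : ℝ => Real.sqrt (2*(N:ℝ)) * (x^1 * (hermiteFn N x * hermiteFn (N-1) x)))
        = fun x => x * g x := by ext x; simp [hg]; ring
    rw [← e]; exact (integrable_xk_hermite_mul N (N-1) 1).const_mul _
  have KTInt : Integrable (fun z => K (m + z)) := integrable_comp_add KInt m
  have gTInt : Integrable (fun z => g (m + z)) := integrable_comp_add gInt m
  have xgTInt : Integrable (fun z => z * g (m + z)) := by
    have h1 : Integrable (fun z => (m + z) * g (m + z)) :=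
      integrable_comp_add xgInt m
    have h2 := h1.sub (gTInt.const_mul m)
    apply h2.congr
    filter_upwards with z
    simp only [Pi.sub_apply]
    ring
  -- derivative of the translated product
  have hder : ∀ z : ℝ, HasDerivAt (fun z => z * K (m + z)) (K (m + z) + z * (-(g (m + z)))) z := by
    intro z
    have h1 : HasDerivAt (fun z : ℝ => m + z) 1 z := (hasDerivAt_id z).const_add m
    have h2 : HasDerivAt (fun z : ℝ => K (m + z)) (-(g (m + z))) z := by
      have := (hasDerivAt_K N (m + z)).comp z h1
      simp [hK, hg, mul_comm] at this ⊢
      exact this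
    have : HasDerivAt (fun z => z * K (m + z)) _ z := (hasDerivAt_id z).mul h2
    simpa using this
  -- tendsto of z * K (m+z) to 0
  have htend : Filter.Tendsto (fun z => z * K (m + z)) Filter.atTop (nhds 0) := by
    have e : (fun z => z * K (m + z))
        = fun z => ∑ n ∈ Finset.range N,
            ((m + z) * hermiteFn n (m + z) ^ 2 - m * hermiteFn n (m + z) ^ 2) := by
      ext z; rw [hK]; rw [Finset.mul_sum]
      apply Finset.sum_congr rfl
      intro n _; ring
    rw [e]
    have : (0:ℝ) = ∑ n ∈ Finset.range N, (0:ℝ) := by simp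
    rw [this]
    apply tendsto_finset_sum
    intro n _
    have t1 : Filter.Tendsto (fun x : ℝ => x * hermiteFn n x ^ 2) Filter.atTop (nhds 0) := by
      have := tendsto_xk_hermite_mul n n 1
      apply this.congr
      intro x; ring
    have t2 : Filter.Tendsto (fun x : ℝ => hermiteFn n x ^ 2) Filter.atTop (nhds 0) := by
      have := tendsto_xk_hermite_mul n n 0
      apply this.congr
      intro x; ring
    have c1 := t1.comp (tendsto_add_atTop m)
    have c2 := (t2.comp (tendsto_add_atTop m)).const_mul m
    have := c1.sub c2
    simpa using this
  -- FTC on Ioi 0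
  have f'Int : IntegrableOn (fun z => K (m + z) + z * (-(g (m + z)))) (Set.Ioi (0:ℝ)) := by
    apply Integrable.integrableOn
    have := KTInt.add xgTInt.neg
    apply this.congr
    filter_upwards with z
    simp only [Pi.add_apply, Pi.neg_apply]
    ring
  have hFTC := integral_Ioi_of_hasDerivAt_of_tendsto' (a := (0:ℝ))
    (fun z _ => hder z) f'Int htend
  simp only [zero_mul, sub_zero, zero_sub] at hFTC
  -- split the integral
  have hsplit : ∫ z in Set.Ioi (0:ℝ), (K (m + z) + z * (-(g (m + z))))
      = (∫ z in Set.Ioi (0:ℝ), K (m + z)) + ∫ z in Set.Ioi (0:ℝ), z * (-(g (m + z))) := by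
    apply integral_add KTInt.integrableOn
    apply Integrable.integrableOn
    apply xgTInt.neg.congr
    filter_upwards with z
    simp only [Pi.neg_apply]
    ring
  have hneg : ∫ z in Set.Ioi (0:ℝ), z * (-(g (m + z)))
      = -∫ z in Set.Ioi (0:ℝ), z * g (m + z) := by
    rw [← integral_neg]
    congr 1; ext z; ring
  have key : (∫ z in Set.Ioi (0:ℝ), K (m + z)) = ∫ z in Set.Ioi (0:ℝ), z * g (m + z) := by
    have h0 : (0:ℝ) * K (m + 0) = 0 := by ring
    rw [hsplit, hneg] at hFTC
    linarith [hFTC, h0.symm ▸ hFTC]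
  -- translate the LHS
  have htrans : (∫ x in Set.Ioi m, K x) = ∫ z in Set.Ioi (0:ℝ), K (m + z) := by
    have hpre : (fun z : ℝ => m + z) ⁻¹' Set.Ioi m = Set.Ioi (0:ℝ) := by
      ext z
      simp [Set.mem_Ioi]
    have := (measurePreserving_add_left (volume : Measure ℝ) m).setIntegral_preimage_emb
      (MeasurableEquiv.addLeft m).measurableEmbedding K (Set.Ioi m)
    rw [hpre] at this
    exact this.symm
  -- conclude
  rw [show (∫ x in Set.Ioi m, ∑ n ∈ Finset.range N, hermiteFn n x ^ 2) = ∫ x in Set.Ioi m, K x from rfl,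
    htrans, key]
  rw [show (fun z => z * g (m + z))
      = fun z => Real.sqrt (2 * (N:ℝ)) * (z * hermiteFn N (m + z) * hermiteFn (N-1) (m + z)) by
    ext z; rw [hg]; ring]
  rw [MeasureTheory.integral_const_mul]
end
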